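/- Let W : H₁ → H₂ be a bounded operator between Hilbert spaces and P the orthogonal projection onto the closure of the range of W*. Then for every λ > 0, I − P ≼ λ (W*W + λI)^{-1} in the Loewner order. -/

import Mathlib

open scoped ComplexInnerProductSpace

open ContinuousLinearMap in
lemma aux_smul_isPositive {E : Type*} [NormedAddCommGroup E] [InnerProductSpace ℂ E]
    [CompleteSpace E] {S : E →L[ℂ] E} (hS : S.IsPositive) {c : ℝ} (hc : 0 ≤ c) :
    ((c : ℂ) • S).IsPositive := by
  refine isPositive_def'.mpr ⟨IsSelfAdjoint.smul (Complex.conj_ofReal c) hS.isSelfAdjoint,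
    fun x => ?_⟩
  have : ((c : ℂ) • S).reApplyInnerSelf x = c * S.reApplyInnerSelf x := by
    simp only [reApplyInnerSelf_apply, coe_smul', Pi.smul_apply, inner_smul_left,
      Complex.conj_ofReal]
    exact RCLike.re_ofReal_mul c _
  rw [this]
  exact mul_nonneg hc (hS.2 x)

/-- Let `W : H₁ → H₂` be a bounded operator between Hilbert spaces and `P` the orthogonal
projection onto the closure of the range of `W*`. Then for every `λ > 0`,
`I − P ≼ λ (W*W + λ I)⁻¹` in the Loewner order. -/
theorem proj_complement_le_resolvent {H₁ H₂ : Type*}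
    [NormedAddCommGroup H₁] [InnerProductSpace ℂ H₁] [CompleteSpace H₁] [TopologicalSpace.SeparableSpace H₁]
    [NormedAddCommGroup H₂] [InnerProductSpace ℂ H₂] [CompleteSpace H₂] [TopologicalSpace.SeparableSpace H₂]
    (W : H₁ →L[ℂ] H₂) (l : ℝ) (hl : 0 < l)
    (K : Submodule ℂ H₁)
    (hK : K = (LinearMap.range (ContinuousLinearMap.adjoint W : H₂ →ₗ[ℂ] H₁)).topologicalClosure)
    [CompleteSpace K] :
    ((l : ℂ) • Ring.inverse ((ContinuousLinearMap.adjoint W).comp W + (l : ℂ) • (1 : H₁ →L[ℂ] H₁))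
      - (1 - K.subtypeL.comp K.orthogonalProjectionOnto)).IsPositive := by
  classical
  set T : H₁ →L[ℂ] H₁ := (ContinuousLinearMap.adjoint W).comp W with hTdef
  set A : H₁ →L[ℂ] H₁ := T + (l : ℂ) • 1 with hAdef
  set P : H₁ →L[ℂ] H₁ := K.subtypeL.comp K.orthogonalProjectionOnto with hPdef
  set B : H₁ →L[ℂ] H₁ := Ring.inverse A with hBdef
  -- T is positive
  have hTpos : T.IsPositive := by
    have h := (ContinuousLinearMap.isPositive_one (E := H₂)).adjoint_conj W
    simpa [ContinuousLinearMap.one_def] using h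
  have hl1pos : ((l : ℂ) • (1 : H₁ →L[ℂ] H₁)).IsPositive :=
    aux_smul_isPositive ContinuousLinearMap.isPositive_one hl.le
  have hApos : A.IsPositive := hTpos.add hl1pos
  -- re ⟪A x, x⟫ ≥ l * ‖x‖²
  have hAlow : ∀ x : H₁, l * ‖x‖ ^ 2 ≤ Complex.re ⟪A x, x⟫ := by
    intro x
    have h1 : Complex.re ⟪A x, x⟫ =
        Complex.re ⟪T x, x⟫ + Complex.re ⟪((l : ℂ) • (1 : H₁ →L[ℂ] H₁)) x, x⟫ := by
      simp [hAdef, inner_add_left]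
    have h2 : Complex.re ⟪((l : ℂ) • (1 : H₁ →L[ℂ] H₁)) x, x⟫ = l * ‖x‖ ^ 2 := by
      simp only [ContinuousLinearMap.smul_apply, ContinuousLinearMap.one_apply,
        inner_smul_left, Complex.conj_ofReal, Complex.re_ofReal_mul]
      rw [← @inner_self_eq_norm_sq ℂ]
      rfl
    have h3 : 0 ≤ Complex.re ⟪T x, x⟫ := hTpos.re_inner_nonneg_left x
    rw [h1, h2]; linarith
  -- A is a unit
  have hAunit : IsUnit A := by
    refine ContinuousLinearMap.isUnit_of_forall_le_norm_inner_map A (c := l.toNNReal)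
      (by simpa using hl) (fun x => ?_)
    have h1 : l * ‖x‖ ^ 2 ≤ Complex.re ⟪A x, x⟫ := hAlow x
    have h2 : Complex.re ⟪A x, x⟫ ≤ ‖⟪A x, x⟫‖ := Complex.re_le_norm _
    have : (l.toNNReal : ℝ) = l := Real.coe_toNNReal l hl.le
    rw [this]
    nlinarith [norm_nonneg (⟪A x, x⟫)]
  have hBA : B * A = 1 := Ring.inverse_mul_cancel A hAunit
  have hAB : A * B = 1 := Ring.mul_inverse_cancel A hAunit
  -- B is self-adjoint
  have hAsa : IsSelfAdjoint A := hApos.isSelfAdjoint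
  have hBsa : IsSelfAdjoint B := by
    rw [hBdef, IsSelfAdjoint, ← Ring.inverse_star, hAsa.star_eq]
  -- B is positive
  have hBpos : B.IsPositive := by
    refine ContinuousLinearMap.isPositive_def'.mpr ⟨hBsa, fun x => ?_⟩
    have hx : A (B x) = x := by
      have := congrArg (fun f : H₁ →L[ℂ] H₁ => f x) hAB
      simpa [ContinuousLinearMap.mul_apply] using this
    have h2 : Complex.re ⟪B x, x⟫ = Complex.re ⟪B x, A (B x)⟫ := by rw [hx]
    have h3 : Complex.re ⟪B x, A (B x)⟫ = Complex.re ⟪A (B x), B x⟫ := by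
      rw [← inner_conj_symm (B x) (A (B x))]
      exact Complex.conj_re _
    have h4 : B.reApplyInnerSelf x = Complex.re ⟪B x, x⟫ := rfl
    rw [h4, h2, h3]
    exact hApos.re_inner_nonneg_left (B x)
  -- P is self-adjoint and idempotent
  have hPsa : IsSelfAdjoint P := isSelfAdjoint_starProjection K
  have hPP : P * P = P := by
    ext x
    simp [hPdef, ContinuousLinearMap.mul_apply, Submodule.starProjection_eq_self_iff]
  -- W kills Kᗮ, hence T ∘ (1 - P) = 0
  have hWker : ∀ u : H₁, u ∈ Kᗮ → W u = 0 := by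
    intro u hu
    have hmem : (ContinuousLinearMap.adjoint W) (W u) ∈ K := by
      rw [hK]
      exact Submodule.le_topologicalClosure _ (LinearMap.mem_range_self _ _)
    have h0 : ⟪(ContinuousLinearMap.adjoint W) (W u), u⟫ = 0 :=
      (Submodule.mem_orthogonal K u).mp hu _ hmem
    rw [ContinuousLinearMap.adjoint_inner_left] at h0
    exact inner_self_eq_zero.mp h0
  have hA1P : A * (1 - P) = (l : ℂ) • (1 - P) := by
    ext x
    have hmem : x - (K.orthogonalProjectionOnto x : H₁) ∈ Kᗮ :=
      Submodule.sub_starProjection_mem_orthogonal x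
    have hW0 : W (x - P x) = 0 := hWker _ hmem
    simp only [ContinuousLinearMap.mul_apply, ContinuousLinearMap.sub_apply,
      ContinuousLinearMap.one_apply, ContinuousLinearMap.smul_apply]
    rw [hAdef]
    simp only [ContinuousLinearMap.add_apply, ContinuousLinearMap.smul_apply,
      ContinuousLinearMap.one_apply, hTdef, ContinuousLinearMap.comp_apply]
    rw [show W (x - P x) = 0 from hW0]
    simp
  -- 1 - P = l • (B * (1 - P))
  have h1P : (1 - P : H₁ →L[ℂ] H₁) = (l : ℂ) • (B * (1 - P)) := by
    calc (1 - P : H₁ →L[ℂ] H₁) = B * A * (1 - P) := by rw [hBA, one_mul]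
    _ = B * (A * (1 - P)) := by rw [mul_assoc]
    _ = B * ((l : ℂ) • (1 - P)) := by rw [hA1P]
    _ = (l : ℂ) • (B * (1 - P)) := by rw [mul_smul_comm]
  -- A commutes with P, hence B commutes with P
  have hAP : A * P = P * A := by
    have h1 : A * (1 - P) = (1 - P) * A := by
      have := congrArg star hA1P
      rw [star_mul, hAsa.star_eq, star_smul] at this
      have hstar1P : star (1 - P : H₁ →L[ℂ] H₁) = 1 - P := by
        simp [star_sub, hPsa.star_eq]
      rw [hstar1P] at this
      rw [hA1P, this]
      simp
    have h2 := h1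
    rw [mul_sub, sub_mul, mul_one, one_mul] at h2
    exact sub_right_injective h2
  have hBP : B * P = P * B := by
    have e1 : B * (A * P) * B = P * B := by
      rw [← mul_assoc B A P, hBA, one_mul]
    have e2 : B * (P * A) * B = B * P := by
      rw [← mul_assoc B P A, mul_assoc (B * P) A B, hAB, mul_one]
    rw [← e2, ← hAP, e1]
  -- main identity: l•B - (1 - P) = l • (P * B * P)
  have hmain : (l : ℂ) • B - (1 - P) = (l : ℂ) • (P * B * P) := by
    have h1 : (l : ℂ) • B - (1 - P) = (l : ℂ) • (B * P) := by
      rw [h1P, ← smul_sub]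
      congr 1
      rw [mul_sub, mul_one, sub_sub_cancel]
    rw [h1]
    congr 1
    calc B * P = B * (P * P) := by rw [hPP]
    _ = (B * P) * P := (mul_assoc B P P).symm
    _ = (P * B) * P := by rw [hBP]
  -- conclude
  have hconc : ((l : ℂ) • (P * B * P)).IsPositive := by
    have hadj : ContinuousLinearMap.adjoint P = P := hPsa.adjoint_eq
    have := hBpos.conj_adjoint P
    rw [hadj] at this
    have hPBP : (P ∘L B ∘L P) = P * B * P := by
      rw [mul_assoc]; rfl
    rw [hPBP] at this
    exact aux_smul_isPositive this hl.le
  rw [show ((l : ℂ) • B - (1 - P)) = (l : ℂ) • (P * B * P) from hmain]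
  exact hconc
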